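/- Let G be a finite group of order n and suppose that for every normal subgroup N of G and every x ∈ G, u ∈ C_n with o(xN) = o(u·C_{n,|N|}), there is a bijection from xN onto u·C_{n,|N|} preserving divisibility of orders coset-element-wise, and additionally there is a bijection θ : G/N → C_n/C_{n,|N|} with o(xN) | o(θ(xN)). Then there exists a bijection f : G → C_n with o(x) | o(f(x)) for all x ∈ G. -/

import Mathlib

set_option linter.unusedSectionVars false
set_option maxHeartbeats 1000000


/-- `Cc n m` : the (unique, when `m ∣ n`) subgroup of order `m` of the cyclic group of
order `n`, realized as the subgroup of `Multiplicative (ZMod n)` generated by `n/m`. -/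
def Cc (n m : ℕ) : Subgroup (Multiplicative (ZMod n)) :=
  Subgroup.zpowers (Multiplicative.ofAdd ((n / m : ℕ) : ZMod n))

section helpers

lemma core_dvd {n k X X' T : ℕ} (hn : 0 < n) (hk : k ∣ n) (hk0 : 0 < k)
    (hX : 0 < X) (hX' : 0 < X')
    (hd : Nat.gcd k X ∣ Nat.gcd k X')
    (ht : Nat.Coprime T (n / Nat.gcd n ((Nat.gcd k X' / Nat.gcd k X) ^ n)))
    (hcong : X ≡ T * X' [MOD n / Nat.gcd n ((Nat.gcd k X' / Nat.gcd k X) ^ n)]) :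
    Nat.gcd n X ∣ Nat.gcd n X' := by
  set d := Nat.gcd k X with hdset
  set d' := Nat.gcd k X' with hd'set
  set e := d' / d with heset
  set E := Nat.gcd n (e ^ n) with hEset
  set w := n / E with hwset
  have hd0 : 0 < d := Nat.gcd_pos_of_pos_left _ hk0
  have hd'0 : 0 < d' := Nat.gcd_pos_of_pos_left _ hk0
  have he0 : 0 < e := Nat.div_pos (Nat.le_of_dvd hd'0 hd) hd0
  have hde : d * e = d' := Nat.mul_div_cancel' hd
  have hE0 : 0 < E := Nat.gcd_pos_of_pos_left _ hn
  have hEn : E ∣ n := Nat.gcd_dvd_left _ _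
  have hw0 : 0 < w := Nat.div_pos (Nat.le_of_dvd hn hEn) hE0
  rw [← Nat.factorization_le_iff_dvd (Nat.gcd_pos_of_pos_left _ hn).ne'
    (Nat.gcd_pos_of_pos_left _ hn).ne']
  rw [Nat.factorization_gcd hn.ne' hX.ne', Nat.factorization_gcd hn.ne' hX'.ne']
  intro q
  simp only [Finsupp.inf_apply]
  by_cases hq : q.Prime
  · by_cases hqe : q ∣ e
    · -- automatic case
      have hvd' : d'.factorization = d.factorization + e.factorization := by
        rw [← hde, Nat.factorization_mul hd0.ne' he0.ne']
      have hlt : d.factorization q < d'.factorization q := by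
        rw [hvd']
        have : 0 < e.factorization q := hq.factorization_pos_of_dvd he0.ne' hqe
        simp only [Finsupp.add_apply]; omega
      have hd'k : d'.factorization q ≤ k.factorization q := by
        exact (Nat.factorization_le_iff_dvd hd'0.ne' hk0.ne').2 (Nat.gcd_dvd_left _ _) q
      have hvd : d.factorization q = min (k.factorization q) (X.factorization q) := by
        rw [hdset, Nat.factorization_gcd hk0.ne' hX.ne']; rfl
      have hvd'2 : d'.factorization q = min (k.factorization q) (X'.factorization q) := by
        rw [hd'set, Nat.factorization_gcd hk0.ne' hX'.ne']; rfl
      have hXq : X.factorization q = d.factorization q := by omega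
      have hX'q : d'.factorization q ≤ X'.factorization q := by omega
      exact le_min (min_le_left _ _) (by omega)
    · -- congruence case
      have hvE : E.factorization q = 0 := by
        rw [hEset, Nat.factorization_gcd hn.ne' (pow_pos he0 n).ne']
        have : (e ^ n).factorization q = 0 := by
          rw [Nat.factorization_pow]
          simp [Nat.factorization_eq_zero_of_not_dvd hqe]
        simp [this, Nat.factorization_eq_zero_of_not_dvd hqe]
      have hvw : w.factorization q = n.factorization q := by
        rw [hwset, Nat.factorization_div hEn]
        simp [hvE]
      set s := min (n.factorization q) (X.factorization q) with hs
      have hsX : q ^ s ∣ X := (pow_dvd_pow q (min_le_right _ _)).trans (Nat.ordProj_dvd X q)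
      have hsw : q ^ s ∣ w := by
        refine (pow_dvd_pow q ?_).trans (Nat.ordProj_dvd w q)
        rw [hvw]; exact min_le_left _ _
      have hcong2 : X ≡ T * X' [MOD q ^ s] := hcong.of_dvd hsw
      have hdTX' : q ^ s ∣ T * X' := by
        have : (0 : ℕ) ≡ T * X' [MOD q ^ s] :=
          (Nat.modEq_zero_iff_dvd.2 hsX).symm.trans hcong2
        exact (Nat.modEq_zero_iff_dvd.1 this.symm)
      have hcop : Nat.Coprime (q ^ s) T := Nat.Coprime.coprime_dvd_left hsw ht.symm
      have hdX' : q ^ s ∣ X' := hcop.dvd_of_dvd_mul_left hdTX'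
      have : s ≤ X'.factorization q :=
        (Nat.Prime.pow_dvd_iff_le_factorization hq hX'.ne').1 hdX'
      exact le_min (min_le_left _ _) this
  · simp [Nat.factorization_eq_zero_of_not_prime _ hq]


lemma exists_unit_align {w γ a a' : ℕ} [NeZero w] (hγw : γ ∣ w) (hγ0 : 0 < γ)
    (hgcd : Nat.gcd γ a = Nat.gcd γ a') :
    ∃ t : (ZMod w)ˣ, ((t : ZMod w).val * a') ≡ a [MOD γ] := by
  set δ := Nat.gcd γ a with hδ
  have hδ0 : 0 < δ := Nat.gcd_pos_of_pos_left _ hγ0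
  set γ₁ := γ / δ with hγ₁
  have hδγ : δ ∣ γ := Nat.gcd_dvd_left _ _
  have hδa : δ ∣ a := Nat.gcd_dvd_right _ _
  have hδa' : δ ∣ a' := hgcd ▸ Nat.gcd_dvd_right γ a'
  set α := a / δ with hα
  set α' := a' / δ with hα'
  have hcopα : Nat.Coprime α γ₁ := (Nat.coprime_div_gcd_div_gcd hδ0).symm
  have hcopα' : Nat.Coprime α' γ₁ := by
    have := Nat.coprime_div_gcd_div_gcd (m := γ) (n := a') (hgcd ▸ hδ0)
    rw [← hgcd] at this
    exact this.symm
  have hγ₁w : γ₁ ∣ w := (Nat.div_dvd_of_dvd hδγ).trans hγw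
  set cα := ZMod.unitOfCoprime α hcopα with hcα
  set cα' := ZMod.unitOfCoprime α' hcopα' with hcα'
  set c := cα * cα'⁻¹ with hc
  obtain ⟨t, ht⟩ := ZMod.unitsMap_surjective hγ₁w c
  refine ⟨t, ?_⟩
  have key1 : (((t : ZMod w).val : ℕ) : ZMod γ₁) = (c : ZMod γ₁) := by
    have : ((ZMod.unitsMap hγ₁w t : ZMod γ₁)) = (c : ZMod γ₁) := by rw [ht]
    rw [ZMod.unitsMap_def] at this
    rw [← this]
    simp [ZMod.castHom_apply, ZMod.natCast_val]
  have key2 : ((c : ZMod γ₁)) * (α' : ZMod γ₁) = (α : ZMod γ₁) := by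
    have h5 : c * cα' = cα := by rw [hc, inv_mul_cancel_right]
    have h6 : ((c * cα' : (ZMod γ₁)ˣ) : ZMod γ₁) = ((cα : (ZMod γ₁)ˣ) : ZMod γ₁) := by
      rw [h5]
    rw [Units.val_mul, hcα', ZMod.coe_unitOfCoprime] at h6
    rw [h6, hcα, ZMod.coe_unitOfCoprime]
  have key3 : ((t : ZMod w).val * α') ≡ α [MOD γ₁] := by
    rw [← ZMod.natCast_eq_natCast_iff]
    push_cast
    rw [key1, key2]
  have key4 : δ * ((t : ZMod w).val * α') ≡ δ * α [MOD δ * γ₁] := key3.mul_left' δ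
  rw [Nat.mul_div_cancel' hδγ] at key4
  calc (t : ZMod w).val * a' = δ * ((t : ZMod w).val * α') := by
        obtain ⟨b, hb⟩ := hδa'
        rw [hα', hb, Nat.mul_div_cancel_left b hδ0]
        ring
    _ ≡ δ * α [MOD γ] := key4
    _ = a := Nat.mul_div_cancel' hδa


lemma fiber_shift {M W : Type*} [AddCommGroup M] [AddCommGroup W] (χ : M →+ W) (r₁ r₂ : W)
    (h : (∃ j, χ j = r₁) ↔ (∃ j, χ j = r₂)) :
    Nonempty ({j : M // χ j = r₁} ≃ {j : M // χ j = r₂}) := by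
  by_cases h1 : ∃ j, χ j = r₁
  · obtain ⟨j₀, hj₀⟩ := h1
    obtain ⟨j₁, hj₁⟩ := h.1 ⟨j₀, hj₀⟩
    refine ⟨{ toFun := fun j => ⟨j.1 - j₀ + j₁, by rw [map_add, map_sub, j.2, hj₀, hj₁]; abel⟩,
              invFun := fun j => ⟨j.1 - j₁ + j₀, by rw [map_add, map_sub, j.2, hj₀, hj₁]; abel⟩,
              left_inv := fun j => by ext; simp,
              right_inv := fun j => by ext; simp }⟩
  · have h2 : ¬ ∃ j, χ j = r₂ := fun hh => h1 (h.2 hh)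
    haveI : IsEmpty {j : M // χ j = r₁} := ⟨fun j => h1 ⟨j.1, j.2⟩⟩
    haveI : IsEmpty {j : M // χ j = r₂} := ⟨fun j => h2 ⟨j.1, j.2⟩⟩
    exact ⟨Equiv.equivOfIsEmpty _ _⟩

lemma div_dvd_div_of_dvd {b c n : ℕ} (h1 : b ∣ c) (h2 : c ∣ n) : n / c ∣ n / b := by
  rcases Nat.eq_zero_or_pos b with rfl | hb
  · simp at h1; subst h1; simp
  obtain ⟨r, hr⟩ := h1
  obtain ⟨s, hs⟩ := h2
  subst hr hs
  rcases Nat.eq_zero_or_pos r with rfl | hr0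
  · simp
  rw [Nat.mul_div_cancel_left _ (Nat.mul_pos hb hr0), Nat.mul_assoc,
    Nat.mul_div_cancel_left _ hb]
  exact Dvd.intro_left r rfl

lemma dvd_of_div_dvd_div {d d' k : ℕ} (hk : 0 < k) (hd : d ∣ k) (hd' : d' ∣ k)
    (h : k / d' ∣ k / d) : d ∣ d' := by
  obtain ⟨c, hc⟩ := h
  obtain ⟨s, hs⟩ := hd'
  have hd'0 : 0 < d' := by
    rcases Nat.eq_zero_or_pos d' with rfl | h0
    · simp at hs; omega
    · exact h0
  have hs0 : 0 < s := by
    rcases Nat.eq_zero_or_pos s with rfl | h0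
    · simp at hs; omega
    · exact h0
  have h1 : k / d' = s := by rw [hs, Nat.mul_div_cancel_left _ hd'0]
  have h2 : d * (k / d) = k := Nat.mul_div_cancel' hd
  have h3 : d' * s = d * (s * c) := by
    rw [← hs, ← h2, hc, h1]
  have h4 : d' = d * c := by
    have h5 : d' * s = (d * c) * s := by rw [h3]; ring
    exact Nat.eq_of_mul_eq_mul_right hs0 h5
  exact ⟨c, h4⟩

end helpers

lemma gcd_eq_of_modEq {a b k : ℕ} (h : a ≡ b [MOD k]) : Nat.gcd k a = Nat.gcd k b := by
  rw [Nat.gcd_rec k a, Nat.gcd_rec k b, h]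

section param
variable {n m k : ℕ} [NeZero n] (hmk : m * k = n)

include hmk

lemma hk0' : 0 < k := by
  rcases Nat.eq_zero_or_pos k with h | h
  · subst h; simp at hmk; exact absurd hmk.symm (NeZero.ne n)
  · exact h

lemma hm0' : 0 < m := by
  rcases Nat.eq_zero_or_pos m with h | h
  · subst h; simp at hmk; exact absurd hmk.symm (NeZero.ne n)
  · exact h

lemma hnm' : n / m = k := by
  rw [← hmk]; exact Nat.mul_div_cancel_left k (hm0' hmk)

def phiH : ZMod m →+ ZMod n :=
  ZMod.lift m ⟨zmultiplesHom (ZMod n) ((k : ℕ) : ZMod n), by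
    show (m : ℤ) • ((k : ℕ) : ZMod n) = 0
    have : ((m * k : ℕ) : ZMod n) = 0 := by rw [hmk]; exact ZMod.natCast_self n
    rw [zsmul_eq_mul]
    push_cast
    rw [← Nat.cast_mul, this]⟩

lemma phiH_intCast (z : ℤ) : phiH hmk ((z : ℤ) : ZMod m) = z • ((k : ℕ) : ZMod n) :=
  ZMod.lift_coe m _ z

lemma phiH_apply (j : ZMod m) : phiH hmk j = ((j.val * k : ℕ) : ZMod n) := by
  haveI : NeZero m := ⟨(hm0' hmk).ne'⟩
  conv_lhs => rw [← ZMod.natCast_rightInverse j]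
  have h1 : ((j.val : ℕ) : ZMod m) = (((j.val : ℤ)) : ZMod m) := by push_cast; rfl
  rw [h1, phiH_intCast hmk, zsmul_eq_mul]
  push_cast
  ring

lemma mem_Cc_iff (v : Multiplicative (ZMod n)) :
    v ∈ Cc n m ↔ ∃ z : ℤ, Multiplicative.toAdd v = z • ((k : ℕ) : ZMod n) := by
  rw [Cc, Subgroup.mem_zpowers_iff, hnm' hmk]
  constructor
  · rintro ⟨z, hz⟩
    exact ⟨z, by rw [← hz, ← ofAdd_zsmul]; simp⟩
  · rintro ⟨z, hz⟩
    refine ⟨z, ?_⟩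
    rw [← ofAdd_zsmul, ← hz]
    simp

lemma phiH_injective : Function.Injective (phiH hmk) := by
  haveI : NeZero m := ⟨(hm0' hmk).ne'⟩
  rw [injective_iff_map_eq_zero]
  intro j hj
  rw [phiH_apply hmk, ZMod.natCast_eq_zero_iff] at hj
  rw [← hmk] at hj
  have h2 : m ∣ j.val := (Nat.mul_dvd_mul_iff_right (hk0' hmk)).1 hj
  have h3 : j.val < m := ZMod.val_lt j
  have h4 : j.val = 0 := Nat.eq_zero_of_dvd_of_lt h2 h3
  exact (ZMod.val_eq_zero j).1 h4

lemma ofAdd_phiH_mem (j : ZMod m) : Multiplicative.ofAdd (phiH hmk j) ∈ Cc n m := by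
  rw [mem_Cc_iff hmk]
  refine ⟨(j.val : ℤ), ?_⟩
  rw [toAdd_ofAdd, phiH_apply hmk, zsmul_eq_mul]
  push_cast
  ring

noncomputable def cosetParam (u : Multiplicative (ZMod n)) :
    ZMod m ≃ {v : Multiplicative (ZMod n) // ∃ w ∈ Cc n m, v = u * w} := by
  apply Equiv.ofBijective (fun j => (⟨u * Multiplicative.ofAdd (phiH hmk j),
    Multiplicative.ofAdd (phiH hmk j), ofAdd_phiH_mem hmk j, rfl⟩ :
      {v : Multiplicative (ZMod n) // ∃ w ∈ Cc n m, v = u * w}))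
  constructor
  · intro j j' hjj'
    have h1 : u * Multiplicative.ofAdd (phiH hmk j)
        = u * Multiplicative.ofAdd (phiH hmk j') := congrArg Subtype.val hjj'
    exact phiH_injective hmk (Multiplicative.ofAdd.injective (mul_left_cancel h1))
  · rintro ⟨v, w, hw, rfl⟩
    obtain ⟨z, hz⟩ := (mem_Cc_iff hmk w).1 hw
    refine ⟨((z : ℤ) : ZMod m), Subtype.ext ?_⟩
    show u * Multiplicative.ofAdd (phiH hmk ((z : ℤ) : ZMod m)) = u * w
    rw [phiH_intCast hmk, ← hz]
    simp

lemma cosetParam_coe (u : Multiplicative (ZMod n)) (j : ZMod m) :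
    ((cosetParam hmk u j) : Multiplicative (ZMod n))
      = u * Multiplicative.ofAdd (phiH hmk j) := rfl

lemma coset_gcd (u v : Multiplicative (ZMod n)) (hv : ∃ w ∈ Cc n m, v = u * w) :
    Nat.gcd k (Multiplicative.toAdd v).val = Nat.gcd k (Multiplicative.toAdd u).val := by
  haveI : NeZero k := ⟨(hk0' hmk).ne'⟩
  obtain ⟨w, hw, rfl⟩ := hv
  obtain ⟨z, hz⟩ := (mem_Cc_iff hmk w).1 hw
  have hk : k ∣ n := Dvd.intro_left m hmk
  have h1 : ZMod.castHom hk (ZMod k) (Multiplicative.toAdd (u * w))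
      = ZMod.castHom hk (ZMod k) (Multiplicative.toAdd u) := by
    have : Multiplicative.toAdd (u * w) = Multiplicative.toAdd u + z • ((k:ℕ) : ZMod n) := by
      rw [toAdd_mul, hz]
    rw [this, map_add, map_zsmul, map_natCast, ZMod.natCast_self, smul_zero, add_zero]
  have h2 : (((Multiplicative.toAdd (u * w)).val : ℕ) : ZMod k)
      = (((Multiplicative.toAdd u).val : ℕ) : ZMod k) := by
    rw [ZMod.natCast_val, ZMod.natCast_val, ← ZMod.castHom_apply (h := hk),
      ← ZMod.castHom_apply (h := hk), h1]
  exact gcd_eq_of_modEq ((ZMod.natCast_eq_natCast_iff _ _ _).1 h2)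

end param

section transferMain
variable {n m k : ℕ} [NeZero n] (hmk : m * k = n)

include hmk

/-- the hom to `Multiplicative (ZMod k)` with kernel `Cc n m`. -/
def qhom (hk : k ∣ n) : Multiplicative (ZMod n) →* Multiplicative (ZMod k) :=
  AddMonoidHom.toMultiplicative (ZMod.castHom hk (ZMod k)).toAddMonoidHom

include hmk

lemma cc_eq_ker : Cc n m = MonoidHom.ker (qhom (Dvd.intro_left m hmk)) := by
  have hk : k ∣ n := Dvd.intro_left m hmk
  apply le_antisymm
  · rw [Cc, Subgroup.zpowers_le]
    show (ZMod.castHom hk (ZMod k)) (Multiplicative.toAdd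
      (Multiplicative.ofAdd ((n / m : ℕ) : ZMod n))) = 0
    rw [toAdd_ofAdd, hnm' hmk, map_natCast, ZMod.natCast_self]
  · intro x hx
    have hx' : ((Multiplicative.toAdd x).val : ZMod k) = 0 := by
      have : (ZMod.castHom hk (ZMod k)) (Multiplicative.toAdd x) = 0 := hx
      rwa [ZMod.castHom_apply, ← ZMod.natCast_val] at this
    have hdvd : k ∣ (Multiplicative.toAdd x).val := by
      rwa [ZMod.natCast_eq_zero_iff] at hx'
    obtain ⟨c, hc⟩ := hdvd
    refine ⟨c, ?_⟩
    have : Multiplicative.toAdd x = (c : ℤ) • ((n / m : ℕ) : ZMod n) := by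
      rw [hnm' hmk]
      have : Multiplicative.toAdd x = (((Multiplicative.toAdd x).val : ℕ) : ZMod n) :=
        (ZMod.natCast_rightInverse (Multiplicative.toAdd x)).symm
      rw [this, hc, zsmul_eq_mul]
      push_cast
      ring
    calc Multiplicative.ofAdd ((n / m : ℕ) : ZMod n) ^ (c : ℤ)
        = Multiplicative.ofAdd ((c : ℤ) • ((n / m : ℕ) : ZMod n)) := by
          rw [ofAdd_zsmul]
      _ = x := by rw [← this]; simp

lemma qhom_surj : Function.Surjective (qhom (Dvd.intro_left m hmk) :
    Multiplicative (ZMod n) →* Multiplicative (ZMod k)) := by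
  haveI : NeZero k := ⟨(hk0' hmk).ne'⟩
  intro y
  refine ⟨Multiplicative.ofAdd (((Multiplicative.toAdd y).val : ℕ) : ZMod n), ?_⟩
  show Multiplicative.ofAdd ((ZMod.castHom (Dvd.intro_left m hmk) (ZMod k))
    (((Multiplicative.toAdd y).val : ℕ) : ZMod n)) = y
  rw [map_natCast, ZMod.natCast_rightInverse _]
  simp

lemma orderOf_mk_cc (hker : Cc n m = MonoidHom.ker (qhom (Dvd.intro_left m hmk)))
    (u : Multiplicative (ZMod n)) :
    orderOf (QuotientGroup.mk u : Multiplicative (ZMod n) ⧸ Cc n m)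
      = k / Nat.gcd k (Multiplicative.toAdd u).val := by
  haveI : NeZero k := ⟨(hk0' hmk).ne'⟩
  let Q := (QuotientGroup.quotientMulEquivOfEq hker).trans
    (QuotientGroup.quotientKerEquivOfSurjective _ (qhom_surj hmk))
  have h1 : orderOf (QuotientGroup.mk u : Multiplicative (ZMod n) ⧸ Cc n m)
      = orderOf (Q (QuotientGroup.mk u)) :=
    (orderOf_injective Q.toMonoidHom Q.injective _).symm
  have h2 : Q (QuotientGroup.mk u) = qhom (Dvd.intro_left m hmk) u := rfl
  rw [h1, h2]
  show orderOf (Multiplicative.ofAdd ((ZMod.castHom (Dvd.intro_left m hmk) (ZMod k))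
    (Multiplicative.toAdd u))) = _
  rw [orderOf_ofAdd_eq_addOrderOf, ZMod.castHom_apply, ← ZMod.natCast_val,
    ZMod.addOrderOf_coe _ (NeZero.ne k)]

lemma orderOf_mult' (u : Multiplicative (ZMod n)) :
    orderOf u = n / Nat.gcd n (Multiplicative.toAdd u).val := by
  have h1 : u = Multiplicative.ofAdd (Multiplicative.toAdd u) := rfl
  rw [h1, orderOf_ofAdd_eq_addOrderOf]
  conv_lhs => rw [← ZMod.natCast_rightInverse (Multiplicative.toAdd u)]
  rw [ZMod.addOrderOf_coe _ (NeZero.ne n)]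
  rfl

theorem transfer_coset (u' u : Multiplicative (ZMod n))
    (hdd : Nat.gcd k (Multiplicative.toAdd u).val ∣ Nat.gcd k (Multiplicative.toAdd u').val) :
    ∃ τ : {v : Multiplicative (ZMod n) // ∃ w ∈ Cc n m, v = u' * w}
        ≃ {v : Multiplicative (ZMod n) // ∃ w ∈ Cc n m, v = u * w},
      ∀ v, orderOf (v.1) ∣ orderOf ((τ v).1) := by
  haveI : NeZero k := ⟨(hk0' hmk).ne'⟩
  haveI : NeZero m := ⟨(hm0' hmk).ne'⟩
  have hkn : k ∣ n := Dvd.intro_left m hmk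
  have hn0 : 0 < n := Nat.pos_of_ne_zero (NeZero.ne n)
  set a := (Multiplicative.toAdd u).val with ha
  set a' := (Multiplicative.toAdd u').val with ha'
  set d := Nat.gcd k a with hdef
  set d' := Nat.gcd k a' with hd'ef
  set e := d' / d with he
  set E := Nat.gcd n (e ^ n) with hE
  set w := n / E with hw
  have hd0 : 0 < d := Nat.gcd_pos_of_pos_left _ (hk0' hmk)
  have hd'0 : 0 < d' := Nat.gcd_pos_of_pos_left _ (hk0' hmk)
  have he0 : 0 < e := Nat.div_pos (Nat.le_of_dvd hd'0 hdd) hd0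
  have hde : d * e = d' := Nat.mul_div_cancel' hdd
  have hEdvd : E ∣ n := Nat.gcd_dvd_left _ _
  have hE0 : 0 < E := Nat.gcd_pos_of_pos_left _ hn0
  have hw0 : 0 < w := Nat.div_pos (Nat.le_of_dvd hn0 hEdvd) hE0
  haveI : NeZero w := ⟨hw0.ne'⟩
  have hwn : w ∣ n := Nat.div_dvd_of_dvd hEdvd
  have hcop_we : Nat.Coprime w e := by
    by_contra h
    have hq := Nat.minFac_prime h
    set q := (Nat.gcd w e).minFac with hqdef
    have hqw : q ∣ w := (Nat.minFac_dvd _).trans (Nat.gcd_dvd_left _ _)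
    have hqe : q ∣ e := (Nat.minFac_dvd _).trans (Nat.gcd_dvd_right _ _)
    have h3 : E.factorization q = n.factorization q := by
      rw [hE, Nat.factorization_gcd hn0.ne' (pow_pos he0 n).ne']
      simp only [Finsupp.inf_apply, Nat.factorization_pow, Finsupp.smul_apply,
        smul_eq_mul]
      have h4 : 1 ≤ e.factorization q := hq.factorization_pos_of_dvd he0.ne' hqe
      have h5 : n.factorization q < n := Nat.factorization_lt q hn0.ne'
      have h6 : n.factorization q ≤ n * e.factorization q :=
        le_trans (le_of_lt h5) (Nat.le_mul_of_pos_right n h4)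
      exact min_eq_left h6
    have h6 : w.factorization q = 0 := by
      rw [hw, Nat.factorization_div hEdvd]
      simp [h3]
    have h7 : 0 < w.factorization q := hq.factorization_pos_of_dvd hw0.ne' hqw
    omega
  set γ := Nat.gcd k w with hγdef
  have hγ0 : 0 < γ := Nat.gcd_pos_of_pos_left _ (hk0' hmk)
  have hγw : γ ∣ w := Nat.gcd_dvd_right _ _
  have hγk : γ ∣ k := Nat.gcd_dvd_left _ _
  have hcop_γe : Nat.Coprime γ e := Nat.Coprime.coprime_dvd_left hγw hcop_we
  have hgcdγ : Nat.gcd γ a = Nat.gcd γ a' := by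
    have h1 : Nat.gcd γ a = Nat.gcd γ d := by
      rw [hdef, ← Nat.gcd_assoc, Nat.gcd_eq_left hγk]
    have h2 : Nat.gcd γ a' = Nat.gcd γ d' := by
      rw [hd'ef, ← Nat.gcd_assoc, Nat.gcd_eq_left hγk]
    have h3 : Nat.gcd γ d' = Nat.gcd γ d := by
      rw [← hde, Nat.Coprime.gcd_mul_right_cancel_right d hcop_γe.symm]
    rw [h1, h2, h3]
  obtain ⟨t, ht⟩ := exists_unit_align (w := w) hγw hγ0 hgcdγ
  set Cw := ZMod.castHom hwn (ZMod w) with hCw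
  set χ : ZMod m →+ ZMod w := Cw.toAddMonoidHom.comp (phiH hmk) with hχ
  have chi_mul : ∀ (r : ZMod w) (j : ZMod m), ∃ j', χ j' = r * χ j := by
    intro r j
    refine ⟨r.val • j, ?_⟩
    rw [map_nsmul, nsmul_eq_mul, ZMod.natCast_rightInverse r]
  have hχk : ∃ j, χ j = ((k : ℕ) : ZMod w) := by
    refine ⟨((1 : ℤ) : ZMod m), ?_⟩
    show Cw (phiH hmk ((1 : ℤ) : ZMod m)) = ((k : ℕ) : ZMod w)
    rw [phiH_intCast hmk, one_zsmul, map_natCast]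
  have castval : ∀ x : ZMod n, Cw x = ((x.val : ℕ) : ZMod w) := by
    intro x
    rw [ZMod.natCast_val, ZMod.castHom_apply]
  have hbase : ∃ jb, χ jb
      = Cw (Multiplicative.toAdd u) - (↑t : ZMod w) * Cw (Multiplicative.toAdd u') := by
    have h1 : ((γ : ℕ) : ℤ) ∣ ((a : ℕ) : ℤ) - (((↑t : ZMod w).val * a' : ℕ) : ℤ) := ht.dvd
    obtain ⟨z, hz⟩ := h1
    obtain ⟨j1, hj1⟩ := hχk
    obtain ⟨j2, hj2⟩ := chi_mul ((Nat.gcdA k w : ℤ) : ZMod w) j1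
    have hγw2 : ((γ : ℕ) : ZMod w) = ((Nat.gcdA k w : ℤ) : ZMod w) * ((k : ℕ) : ZMod w) := by
      have hbez := Nat.gcd_eq_gcd_ab k w
      have h2 : (((Nat.gcd k w : ℕ) : ℤ) : ZMod w)
          = ((((k : ℕ) : ℤ) * Nat.gcdA k w + ((w : ℕ) : ℤ) * Nat.gcdB k w : ℤ) : ZMod w) := by
        exact_mod_cast congrArg (fun z : ℤ => ((z : ℤ) : ZMod w)) hbez
      push_cast at h2
      rw [ZMod.natCast_self] at h2
      rw [← hγdef] at h2
      push_cast
      rw [h2]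
      ring
    refine ⟨z • j2, ?_⟩
    rw [map_zsmul, hj2, hj1, ← hγw2]
    rw [castval, castval]
    have h3 : ((a : ℕ) : ZMod w) - (↑t : ZMod w) * ((a' : ℕ) : ZMod w)
        = (((a : ℕ) : ℤ) : ZMod w) - ((((↑t : ZMod w).val * a' : ℕ) : ℤ) : ZMod w) := by
      push_cast
      rw [ZMod.natCast_rightInverse ((↑t : ZMod w))]
    rw [h3, ← Int.cast_sub, hz]
    push_cast
    rw [zsmul_eq_mul]
    ring
  -- the fiber equivalence
  have fib : ∀ c : ZMod w,
      Nonempty ({v' : {v : Multiplicative (ZMod n) // ∃ w' ∈ Cc n m, v = u' * w'} //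
          (↑t : ZMod w) * Cw (Multiplicative.toAdd v'.1) = c}
        ≃ {v : {v : Multiplicative (ZMod n) // ∃ w' ∈ Cc n m, v = u * w'} //
          Cw (Multiplicative.toAdd v.1) = c}) := by
    intro c
    set r₁ := c - Cw (Multiplicative.toAdd u) with hr₁
    set r₂ := (↑t⁻¹ : ZMod w) * (c - (↑t : ZMod w) * Cw (Multiplicative.toAdd u')) with hr₂
    have e1 : {j : ZMod m // χ j = r₂} ≃ {v' : {v : Multiplicative (ZMod n) //
        ∃ w' ∈ Cc n m, v = u' * w'} // (↑t : ZMod w) * Cw (Multiplicative.toAdd v'.1) = c} := by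
      refine Equiv.subtypeEquiv (cosetParam hmk u') (fun j => ?_)
      have hσ : (↑t : ZMod w) * Cw (Multiplicative.toAdd ((cosetParam hmk u' j) :
          Multiplicative (ZMod n))) = (↑t : ZMod w) * (Cw (Multiplicative.toAdd u') + χ j) := by
        rw [cosetParam_coe hmk, toAdd_mul, map_add]
        rfl
      rw [hσ]
      constructor
      · intro hj
        rw [hj, hr₂, mul_add, Units.mul_inv_cancel_left]
        ring
      · intro hj
        have := congrArg (fun x => (↑t⁻¹ : ZMod w) * x) hj
        rw [Units.inv_mul_cancel_left] at this
        rw [hr₂, mul_sub, Units.inv_mul_cancel_left, ← this]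
        ring
    have e2 : {j : ZMod m // χ j = r₁} ≃ {v : {v : Multiplicative (ZMod n) //
        ∃ w' ∈ Cc n m, v = u * w'} // Cw (Multiplicative.toAdd v.1) = c} := by
      refine Equiv.subtypeEquiv (cosetParam hmk u) (fun j => ?_)
      have hρ : Cw (Multiplicative.toAdd ((cosetParam hmk u j) : Multiplicative (ZMod n)))
          = Cw (Multiplicative.toAdd u) + χ j := by
        rw [cosetParam_coe hmk, toAdd_mul, map_add]
        rfl
      rw [hρ, hr₁]
      constructor
      · intro hj; rw [hj]; ring
      · intro hj; rw [← hj]; ring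
    have hmid : (∃ j, χ j = r₂) ↔ (∃ j, χ j = r₁) := by
      obtain ⟨jb, hjb⟩ := hbase
      have hr₂' : r₂ = (↑t⁻¹ : ZMod w) * (r₁ + (Cw (Multiplicative.toAdd u)
          - (↑t : ZMod w) * Cw (Multiplicative.toAdd u'))) := by
        rw [hr₂, hr₁]; ring_nf
      constructor
      · rintro ⟨j, hj⟩
        obtain ⟨j₂, hj₂⟩ := chi_mul (↑t : ZMod w) j
        refine ⟨j₂ - jb, ?_⟩
        rw [map_sub, hj₂, hj, hjb, hr₂', Units.mul_inv_cancel_left]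
        ring
      · rintro ⟨j, hj⟩
        obtain ⟨j₄, hj₄⟩ := chi_mul (↑t⁻¹ : ZMod w) (j + jb)
        refine ⟨j₄, ?_⟩
        rw [hj₄, map_add, hj, hjb, hr₂']
      -- done
    obtain ⟨emid⟩ := fiber_shift χ r₂ r₁ hmid
    exact ⟨(e1.symm.trans emid).trans e2⟩
  let τ := Equiv.ofFiberEquiv (f := fun v' : {v : Multiplicative (ZMod n) //
      ∃ w' ∈ Cc n m, v = u' * w'} => (↑t : ZMod w) * Cw (Multiplicative.toAdd v'.1))
    (g := fun v : {v : Multiplicative (ZMod n) // ∃ w' ∈ Cc n m, v = u * w'} =>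
      Cw (Multiplicative.toAdd v.1)) (fun c => (fib c).some)
  have hτ : ∀ v', Cw (Multiplicative.toAdd (τ v').1)
      = (↑t : ZMod w) * Cw (Multiplicative.toAdd v'.1) :=
    fun v' => Equiv.ofFiberEquiv_map (fun c => (fib c).some) v'
  refine ⟨τ, fun v' => ?_⟩
  set v := τ v' with hv
  set X := (Multiplicative.toAdd v.1).val + n with hX
  set X' := (Multiplicative.toAdd v'.1).val + n with hX'
  have hX0 : 0 < X := by positivity
  have hX'0 : 0 < X' := by positivity
  have hmodk : ∀ Y : ℕ, Y + n ≡ Y [MOD k] := by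
    intro Y
    refine ((Nat.modEq_iff_dvd' (Nat.le_add_right _ _)).2 ?_).symm
    have h9 : Y + n - Y = n := by omega
    rw [h9]; exact hkn
  have hmodn : ∀ Y : ℕ, Y + n ≡ Y [MOD n] := by
    intro Y
    refine ((Nat.modEq_iff_dvd' (Nat.le_add_right _ _)).2 ?_).symm
    have h9 : Y + n - Y = n := by omega
    rw [h9]
  have hgX : Nat.gcd k X = d := by
    rw [hX, gcd_eq_of_modEq (hmodk _)]
    exact coset_gcd hmk u v.1 v.2
  have hgX' : Nat.gcd k X' = d' := by
    rw [hX', gcd_eq_of_modEq (hmodk _)]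
    exact coset_gcd hmk u' v'.1 v'.2
  have hcong : X ≡ (↑t : ZMod w).val * X' [MOD w] := by
    rw [← ZMod.natCast_eq_natCast_iff]
    have hzero : ((n : ℕ) : ZMod w) = 0 := (ZMod.natCast_eq_zero_iff n w).2 hwn
    have hL : ((X : ℕ) : ZMod w) = Cw (Multiplicative.toAdd v.1) := by
      rw [hX, castval]
      push_cast
      rw [hzero, add_zero]
    have hR : (((↑t : ZMod w).val * X' : ℕ) : ZMod w)
        = (↑t : ZMod w) * Cw (Multiplicative.toAdd v'.1) := by
      rw [hX', castval]
      push_cast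
      rw [hzero, add_zero, ZMod.natCast_rightInverse]
    rw [hL, hR, hτ v']
  have hweq : n / Nat.gcd n ((Nat.gcd k X' / Nat.gcd k X) ^ n) = w := by
    rw [hgX, hgX']
  have hdvd2 : Nat.gcd n X ∣ Nat.gcd n X' :=
    core_dvd hn0 hkn (hk0' hmk) hX0 hX'0 (by rw [hgX, hgX']; exact hdd)
      (by rw [hweq]; exact ZMod.val_coe_unit_coprime t)
      (by rw [hweq]; exact hcong)
  have hoX' : orderOf v'.1 = n / Nat.gcd n X' := by
    rw [orderOf_mult' hmk, hX', gcd_eq_of_modEq (hmodn _)]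
  have hoX : orderOf v.1 = n / Nat.gcd n X := by
    rw [orderOf_mult' hmk, hX, gcd_eq_of_modEq (hmodn _)]
  rw [hoX', hoX]
  exact div_dvd_div_of_dvd hdvd2 (Nat.gcd_dvd_left n X')
end transferMain

/-- Gluing along cosets of a normal subgroup: if `G/N → C_n/C_{n,|N|}` admits an
order-divisibility bijection `θ`, and every coset `xN` admits an order-divisibility
bijection onto each coset `u C_{n,|N|}` of the same order, then `G` admits a global
order-divisibility bijection onto `C_n`. -/
theorem stmt8 {G : Type*} [Group G] [Fintype G] (n : ℕ) (hn : n = Fintype.card G)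
    (N : Subgroup G) [N.Normal]
    (θ : (G ⧸ N) ≃ (Multiplicative (ZMod n) ⧸ Cc n (Nat.card N)))
    (hθ : ∀ y : G ⧸ N, orderOf y ∣ orderOf (θ y))
    (hcoset : ∀ (x : G) (u : Multiplicative (ZMod n)),
      orderOf (QuotientGroup.mk x : G ⧸ N)
        = orderOf (QuotientGroup.mk u : Multiplicative (ZMod n) ⧸ Cc n (Nat.card N)) →
      ∃ β : {y : G // ∃ h ∈ N, y = x * h} ≃
          {v : Multiplicative (ZMod n) // ∃ w ∈ Cc n (Nat.card N), v = u * w},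
        ∀ y, orderOf (y : {y : G // ∃ h ∈ N, y = x * h}).1 ∣ orderOf (β y).1) :
    ∃ f : G ≃ Multiplicative (ZMod n), ∀ x : G, orderOf x ∣ orderOf (f x) := by
  classical
  have hn0 : 0 < n := hn ▸ Fintype.card_pos
  haveI : NeZero n := ⟨hn0.ne'⟩
  have hmdvd : Nat.card ↥N ∣ n := by
    rw [hn, ← Nat.card_eq_fintype_card]
    exact Subgroup.card_subgroup_dvd_card N
  obtain ⟨k, hmk⟩ : ∃ k, Nat.card ↥N * k = n := ⟨n / Nat.card ↥N, Nat.mul_div_cancel' hmdvd⟩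
  have hker : Cc n (Nat.card ↥N) = MonoidHom.ker (qhom (Dvd.intro_left _ hmk)) := cc_eq_ker hmk
  haveI : Finite (G ⧸ N) := Quotient.finite _
  haveI : Finite (Multiplicative (ZMod n) ⧸ Cc n (Nat.card ↥N)) := Quotient.finite _
  have Φdata : ∀ y : G ⧸ N, ∃ Φy : {g : G // QuotientGroup.mk g = y} ≃
      {v : Multiplicative (ZMod n) // QuotientGroup.mk v = θ y},
      ∀ gg : {g : G // QuotientGroup.mk g = y}, orderOf gg.1 ∣ orderOf (Φy gg).1 := by
    intro y
    have houty : (QuotientGroup.mk (Quotient.out y) : G ⧸ N) = y := QuotientGroup.out_eq' y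
    set u₀ : Multiplicative (ZMod n) := Quotient.out (θ y) with hu₀
    have hu₀eq : (QuotientGroup.mk u₀ : Multiplicative (ZMod n) ⧸ Cc n (Nat.card ↥N)) = θ y :=
      QuotientGroup.out_eq' (θ y)
    have hOy : 0 < orderOf y := orderOf_pos y
    have hdvdθ : orderOf y ∣ orderOf (θ y) := hθ y
    have hOθ : 0 < orderOf (θ y) := orderOf_pos (θ y)
    have he0 : 0 < orderOf (θ y) / orderOf y := Nat.div_pos (Nat.le_of_dvd hOθ hdvdθ) hOy
    set u' := u₀ ^ (orderOf (θ y) / orderOf y) with hu'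
    have hmku' : (QuotientGroup.mk u' : Multiplicative (ZMod n) ⧸ Cc n (Nat.card ↥N))
        = (QuotientGroup.mk u₀ : Multiplicative (ZMod n) ⧸ Cc n (Nat.card ↥N))
          ^ (orderOf (θ y) / orderOf y) := rfl
    have hord_u' : orderOf (QuotientGroup.mk u' :
        Multiplicative (ZMod n) ⧸ Cc n (Nat.card ↥N)) = orderOf y := by
      rw [hmku', hu₀eq, orderOf_pow_of_dvd he0.ne' (Nat.div_dvd_of_dvd hdvdθ),
        Nat.div_div_self hdvdθ hOθ.ne']
    obtain ⟨β, hβ⟩ := hcoset (Quotient.out y) u' (by rw [houty, hord_u'])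
    have hdd : Nat.gcd k (Multiplicative.toAdd u₀).val
        ∣ Nat.gcd k (Multiplicative.toAdd u').val := by
      have h1 : orderOf (QuotientGroup.mk u' : Multiplicative (ZMod n) ⧸ Cc n (Nat.card ↥N))
          ∣ orderOf (QuotientGroup.mk u₀ :
            Multiplicative (ZMod n) ⧸ Cc n (Nat.card ↥N)) := by
        rw [hord_u', hu₀eq]
        exact hdvdθ
      rw [orderOf_mk_cc hmk hker u', orderOf_mk_cc hmk hker u₀] at h1
      exact dvd_of_div_dvd_div (hk0' hmk) (Nat.gcd_dvd_left _ _) (Nat.gcd_dvd_left _ _) h1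
    obtain ⟨τ, hτ⟩ := transfer_coset hmk u' u₀ hdd
    have hGiff : ∀ g : G, QuotientGroup.mk g = y ↔ ∃ h ∈ N, g = Quotient.out y * h := by
      intro g
      constructor
      · intro hgy
        have h2 : (Quotient.out y)⁻¹ * g ∈ N :=
          QuotientGroup.eq.1 (houty.trans hgy.symm)
        exact ⟨_, h2, by group⟩
      · rintro ⟨h, hh, rfl⟩
        rw [← houty]
        exact (QuotientGroup.eq.2 (by simpa using hh)).symm
    have hCiff : ∀ v : Multiplicative (ZMod n),
        (∃ w ∈ Cc n (Nat.card ↥N), v = u₀ * w) ↔ QuotientGroup.mk v = θ y := by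
      intro v
      constructor
      · rintro ⟨w, hw, rfl⟩
        rw [← hu₀eq]
        exact (QuotientGroup.eq.2 (by simpa using hw)).symm
      · intro hvy
        have h2 : u₀⁻¹ * v ∈ Cc n (Nat.card ↥N) := QuotientGroup.eq.1 (hu₀eq.trans hvy.symm)
        exact ⟨_, h2, by group⟩
    let eG : {g : G // QuotientGroup.mk g = y}
        ≃ {g : G // ∃ h ∈ N, g = Quotient.out y * h} := Equiv.subtypeEquivRight hGiff
    let eC : {v : Multiplicative (ZMod n) // ∃ w ∈ Cc n (Nat.card ↥N), v = u₀ * w}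
        ≃ {v : Multiplicative (ZMod n) // QuotientGroup.mk v = θ y} :=
      Equiv.subtypeEquivRight hCiff
    refine ⟨((eG.trans β).trans τ).trans eC, fun gg => ?_⟩
    have h3 : ((eG gg) : G) = gg.1 := rfl
    have h4 : ((((eG.trans β).trans τ).trans eC) gg).1 = ((τ (β (eG gg))).1) := rfl
    rw [h4, ← h3]
    exact (hβ (eG gg)).trans (hτ (β (eG gg)))
  choose Φ hΦ using Φdata
  refine ⟨(Equiv.sigmaFiberEquiv (QuotientGroup.mk : G → G ⧸ N)).symm.trans
    ((Equiv.sigmaCongr θ Φ).trans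
      (Equiv.sigmaFiberEquiv (QuotientGroup.mk : Multiplicative (ZMod n)
        → Multiplicative (ZMod n) ⧸ Cc n (Nat.card ↥N)))), ?_⟩
  intro x
  exact hΦ (QuotientGroup.mk x) ⟨x, rfl⟩
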